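/- There exists r₀ > 0 such that every maximal solution x : I → ℝ² \ {0} of the toy-model system x₁'(t) = x₁ − x₂/(x₁² + x₂²), x₂'(t) = −x₂ + x₁/(x₁² + x₂²) with initial datum satisfying 0 < |x(0)| < r₀ is defined for all t ∈ ℝ and is periodic, i.e. there exists a period τ > 0 with x(t + τ) = x(t) for all t ∈ ℝ. -/

import Mathlib

/-- The right-hand side of the toy-model ODE `ẋ = A x + x^⊥/|x|²`, `A = diag(1,−1)`. -/
noncomputable def toyRHS (p : ℝ × ℝ) : ℝ × ℝ :=
  (p.1 - p.2 / (p.1 ^ 2 + p.2 ^ 2), -p.2 + p.1 / (p.1 ^ 2 + p.2 ^ 2))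


set_option maxHeartbeats 1000000

section
open Set Real

def toyN (p : ℝ × ℝ) : ℝ := p.1 ^ 2 + p.2 ^ 2

noncomputable def toyH (p : ℝ × ℝ) : ℝ := Real.log (toyN p) / 2 - p.1 * p.2

lemma toyN_pos {p : ℝ × ℝ} (hp : p ≠ 0) : 0 < toyN p := by
  rcases eq_or_ne p.1 0 with h1 | h1
  · have h2 : p.2 ≠ 0 := by
      intro h2; exact hp (Prod.ext h1 h2)
    have := sq_pos_of_ne_zero h2
    have := sq_nonneg p.1
    unfold toyN; nlinarith
  · have := sq_pos_of_ne_zero h1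
    have := sq_nonneg p.2
    unfold toyN; nlinarith

lemma toyN_continuous : Continuous toyN := by
  unfold toyN; fun_prop

/-- the key derivative computation: `H` is conserved. -/
lemma toyH_hasDerivAt_zero {x : ℝ → ℝ × ℝ} {t : ℝ}
    (hx : HasDerivAt x (toyRHS (x t)) t) (h0 : x t ≠ 0) :
    HasDerivAt (fun s => toyH (x s)) 0 t := by
  have hn : toyN (x t) ≠ 0 := (toyN_pos h0).ne'
  have h1 : HasDerivAt (fun s => (x s).1) (toyRHS (x t)).1 t := hx.fst
  have h2 : HasDerivAt (fun s => (x s).2) (toyRHS (x t)).2 t := hx.snd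
  have hN : HasDerivAt (fun s => toyN (x s))
      (2 * (x t).1 * (toyRHS (x t)).1 + 2 * (x t).2 * (toyRHS (x t)).2) t := by
    have := ((h1.fun_pow 2).fun_add (h2.fun_pow 2))
    simpa [toyN, mul_comm, mul_assoc, mul_left_comm] using this
  have hlog : HasDerivAt (fun s => Real.log (toyN (x s)))
      ((2 * (x t).1 * (toyRHS (x t)).1 + 2 * (x t).2 * (toyRHS (x t)).2) / toyN (x t)) t :=
    hN.log hn
  have hmul : HasDerivAt (fun s => (x s).1 * (x s).2)
      ((toyRHS (x t)).1 * (x t).2 + (x t).1 * (toyRHS (x t)).2) t := h1.mul h2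
  have := (hlog.div_const 2).fun_sub hmul
  refine this.congr_deriv ?_
  have hn' : (x t).1 ^ 2 + (x t).2 ^ 2 ≠ 0 := hn
  simp only [toyRHS, toyN]
  field_simp
  ring

lemma toy_inv_diff_bound {δ : ℝ} (hδ : 0 < δ) {p q : ℝ × ℝ}
    (hp : δ ≤ toyN p) (hq : δ ≤ toyN q) :
    |p.1 / toyN p - q.1 / toyN q| ≤ 2 / δ * dist p q ∧
    |p.2 / toyN p - q.2 / toyN q| ≤ 2 / δ * dist p q := by
  have hnp : (0:ℝ) < toyN p := lt_of_lt_of_le hδ hp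
  have hnq : (0:ℝ) < toyN q := lt_of_lt_of_le hδ hq
  have hd1 : |p.1 - q.1| ≤ dist p q := by
    rw [Prod.dist_eq]
    exact le_trans (le_of_eq (Real.dist_eq p.1 q.1).symm) (le_max_left _ _)
  have hd2 : |p.2 - q.2| ≤ dist p q := by
    rw [Prod.dist_eq]
    exact le_trans (le_of_eq (Real.dist_eq p.2 q.2).symm) (le_max_right _ _)
  have hd0 : 0 ≤ dist p q := dist_nonneg
  have id1 : (p.1 * toyN q - q.1 * toyN p) ^ 2 + (p.2 * toyN q - q.2 * toyN p) ^ 2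
      = toyN p * toyN q * ((p.1 - q.1) ^ 2 + (p.2 - q.2) ^ 2) := by
    simp only [toyN]; ring
  have hsum : (p.1 - q.1) ^ 2 + (p.2 - q.2) ^ 2 ≤ 2 * dist p q ^ 2 := by
    have e1 : (p.1 - q.1) ^ 2 ≤ dist p q ^ 2 := by
      nlinarith [abs_nonneg (p.1 - q.1), sq_abs (p.1 - q.1)]
    have e2 : (p.2 - q.2) ^ 2 ≤ dist p q ^ 2 := by
      nlinarith [abs_nonneg (p.2 - q.2), sq_abs (p.2 - q.2)]
    linarith
  constructor
  · have heq : p.1 / toyN p - q.1 / toyN q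
        = (p.1 * toyN q - q.1 * toyN p) / (toyN p * toyN q) := by
      field_simp
    rw [heq]
    rw [abs_div, abs_of_pos (by positivity : (0:ℝ) < toyN p * toyN q)]
    rw [div_le_iff₀ (by positivity)]
    have key : (p.1 * toyN q - q.1 * toyN p) ^ 2 ≤ toyN p * toyN q * (2 * dist p q ^ 2) := by
      nlinarith [sq_nonneg (p.2 * toyN q - q.2 * toyN p),
        mul_le_mul_of_nonneg_left hsum (le_of_lt (mul_pos hnp hnq))]
    apply abs_le_of_sq_le_sq _ (by positivity)
    have h1 : δ ^ 2 ≤ toyN p * toyN q := by nlinarith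
    have e : (2 / δ * dist p q * (toyN p * toyN q)) ^ 2
        = 4 * dist p q ^ 2 * (toyN p * toyN q) ^ 2 / δ ^ 2 := by
      field_simp; ring
    rw [e, le_div_iff₀ (by positivity)]
    have f1 := mul_le_mul_of_nonneg_left h1
        (by positivity : (0:ℝ) ≤ 2 * dist p q ^ 2 * (toyN p * toyN q))
    have f2 := mul_le_mul_of_nonneg_right key (sq_nonneg δ)
    have f3 : (0:ℝ) ≤ dist p q ^ 2 * (toyN p * toyN q) ^ 2 := by positivity
    nlinarith [f1, f2, f3]
  · have heq : p.2 / toyN p - q.2 / toyN q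
        = (p.2 * toyN q - q.2 * toyN p) / (toyN p * toyN q) := by
      field_simp
    rw [heq]
    rw [abs_div, abs_of_pos (by positivity : (0:ℝ) < toyN p * toyN q)]
    rw [div_le_iff₀ (by positivity)]
    have key : (p.2 * toyN q - q.2 * toyN p) ^ 2 ≤ toyN p * toyN q * (2 * dist p q ^ 2) := by
      nlinarith [sq_nonneg (p.1 * toyN q - q.1 * toyN p),
        mul_le_mul_of_nonneg_left hsum (le_of_lt (mul_pos hnp hnq))]
    apply abs_le_of_sq_le_sq _ (by positivity)
    have h1 : δ ^ 2 ≤ toyN p * toyN q := by nlinarith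
    have e : (2 / δ * dist p q * (toyN p * toyN q)) ^ 2
        = 4 * dist p q ^ 2 * (toyN p * toyN q) ^ 2 / δ ^ 2 := by
      field_simp; ring
    rw [e, le_div_iff₀ (by positivity)]
    have f1 := mul_le_mul_of_nonneg_left h1
        (by positivity : (0:ℝ) ≤ 2 * dist p q ^ 2 * (toyN p * toyN q))
    have f2 := mul_le_mul_of_nonneg_right key (sq_nonneg δ)
    have f3 : (0:ℝ) ≤ dist p q ^ 2 * (toyN p * toyN q) ^ 2 := by positivity
    nlinarith [f1, f2, f3]

lemma toy_lipschitzOnWith {δ : ℝ} (hδ : 0 < δ) :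
    LipschitzOnWith (1 + 2 / δ).toNNReal toyRHS {p : ℝ × ℝ | δ ≤ toyN p} := by
  rw [lipschitzOnWith_iff_dist_le_mul]
  intro p hp q hq
  have h := toy_inv_diff_bound hδ hp hq
  have hK : ((1 + 2 / δ).toNNReal : ℝ) = 1 + 2 / δ :=
    Real.coe_toNNReal _ (by positivity)
  rw [hK, Prod.dist_eq]
  have hd1 : |p.1 - q.1| ≤ dist p q := by
    rw [Prod.dist_eq]
    exact le_trans (le_of_eq (Real.dist_eq p.1 q.1).symm) (le_max_left _ _)
  have hd2 : |p.2 - q.2| ≤ dist p q := by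
    rw [Prod.dist_eq]
    exact le_trans (le_of_eq (Real.dist_eq p.2 q.2).symm) (le_max_right _ _)
  apply max_le
  · rw [Real.dist_eq]
    simp only [toyRHS]
    have : (p.1 - p.2 / (p.1 ^ 2 + p.2 ^ 2)) - (q.1 - q.2 / (q.1 ^ 2 + q.2 ^ 2))
        = (p.1 - q.1) - (p.2 / toyN p - q.2 / toyN q) := by
      simp only [toyN]; ring
    rw [this]
    calc |(p.1 - q.1) - (p.2 / toyN p - q.2 / toyN q)|
        ≤ |p.1 - q.1| + |p.2 / toyN p - q.2 / toyN q| := abs_sub _ _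
      _ ≤ dist p q + 2 / δ * dist p q := add_le_add hd1 h.2
      _ = (1 + 2 / δ) * dist p q := by ring
  · rw [Real.dist_eq]
    simp only [toyRHS]
    have : (-p.2 + p.1 / (p.1 ^ 2 + p.2 ^ 2)) - (-q.2 + q.1 / (q.1 ^ 2 + q.2 ^ 2))
        = -(p.2 - q.2) + (p.1 / toyN p - q.1 / toyN q) := by
      simp only [toyN]; ring
    rw [this]
    calc |-(p.2 - q.2) + (p.1 / toyN p - q.1 / toyN q)|
        ≤ |-(p.2 - q.2)| + |p.1 / toyN p - q.1 / toyN q| := abs_add_le _ _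
      _ ≤ dist p q + 2 / δ * dist p q := by
          rw [abs_neg]; exact add_le_add hd2 h.1
      _ = (1 + 2 / δ) * dist p q := by ring

lemma toy_norm_le {p : ℝ × ℝ} {δ : ℝ} (hδ : 0 < δ) (hn : δ ≤ toyN p)
    (h1 : |p.1| ≤ 2) (h2 : |p.2| ≤ 2) : ‖toyRHS p‖ ≤ 2 + 2 / δ := by
  have hnp : (0:ℝ) < toyN p := lt_of_lt_of_le hδ hn
  have hb : ∀ a : ℝ, |a| ≤ 2 → |a| / toyN p ≤ 2 / δ := fun a ha =>
    div_le_div₀ (by norm_num) ha hδ hn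
  rw [Prod.norm_def]
  apply max_le
  · show ‖(toyRHS p).1‖ ≤ _
    simp only [toyRHS, Real.norm_eq_abs]
    calc |p.1 - p.2 / (p.1 ^ 2 + p.2 ^ 2)|
        ≤ |p.1| + |p.2 / (p.1 ^ 2 + p.2 ^ 2)| := abs_sub _ _
      _ ≤ 2 + 2 / δ := by
          apply add_le_add h1
          rw [abs_div, abs_of_pos (show (0:ℝ) < p.1 ^ 2 + p.2 ^ 2 from hnp)]
          exact hb p.2 h2
  · show ‖(toyRHS p).2‖ ≤ _
    simp only [toyRHS, Real.norm_eq_abs]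
    calc |-p.2 + p.1 / (p.1 ^ 2 + p.2 ^ 2)|
        ≤ |-p.2| + |p.1 / (p.1 ^ 2 + p.2 ^ 2)| := abs_add_le _ _
      _ ≤ 2 + 2 / δ := by
          rw [abs_neg]
          apply add_le_add h2
          rw [abs_div, abs_of_pos (show (0:ℝ) < p.1 ^ 2 + p.2 ^ 2 from hnp)]
          exact hb p.1 h1

lemma toy_ball_subset {m : ℝ} (hm0 : 0 < m) (hm1 : m ≤ 1) {x₀ : ℝ × ℝ}
    (hx : m ≤ toyN x₀) (hx1 : toyN x₀ ≤ 1) {p : ℝ × ℝ}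
    (hp : p ∈ Metric.closedBall x₀ (m / 8)) :
    m / 2 ≤ toyN p ∧ |p.1| ≤ 2 ∧ |p.2| ≤ 2 := by
  rw [Metric.mem_closedBall, Prod.dist_eq] at hp
  have hb1 : |p.1 - x₀.1| ≤ m / 8 := by
    rw [← Real.dist_eq]; exact le_trans (le_max_left _ _) hp
  have hb2 : |p.2 - x₀.2| ≤ m / 8 := by
    rw [← Real.dist_eq]; exact le_trans (le_max_right _ _) hp
  have hx11 : |x₀.1| ≤ 1 := by
    apply abs_le_of_sq_le_sq _ (by norm_num)
    have := sq_nonneg x₀.2; simp only [toyN] at hx1; nlinarith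
  have hx21 : |x₀.2| ≤ 1 := by
    apply abs_le_of_sq_le_sq _ (by norm_num)
    have := sq_nonneg x₀.1; simp only [toyN] at hx1; nlinarith
  have d1 := abs_le.mp hb1
  have d2 := abs_le.mp hb2
  have e1 := abs_le.mp hx11
  have e2 := abs_le.mp hx21
  refine ⟨?_, ?_, ?_⟩
  · simp only [toyN] at hx ⊢
    nlinarith [mul_nonneg (by linarith [e1.2] : (0:ℝ) ≤ 1 - x₀.1) (by linarith [d1.2] : (0:ℝ) ≤ m/8 - (p.1-x₀.1)),
      mul_nonneg (by linarith [e1.1] : (0:ℝ) ≤ 1 + x₀.1) (by linarith [d1.1] : (0:ℝ) ≤ m/8 + (p.1-x₀.1)),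
      mul_nonneg (by linarith [e2.2] : (0:ℝ) ≤ 1 - x₀.2) (by linarith [d2.2] : (0:ℝ) ≤ m/8 - (p.2-x₀.2)),
      mul_nonneg (by linarith [e2.1] : (0:ℝ) ≤ 1 + x₀.2) (by linarith [d2.1] : (0:ℝ) ≤ m/8 + (p.2-x₀.2)),
      sq_nonneg (p.1 - x₀.1), sq_nonneg (p.2 - x₀.2)]
  · have : |p.1| ≤ |x₀.1| + |p.1 - x₀.1| := by
      calc |p.1| = |x₀.1 + (p.1 - x₀.1)| := by ring_nf
        _ ≤ |x₀.1| + |p.1 - x₀.1| := abs_add_le _ _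
    linarith
  · have : |p.2| ≤ |x₀.2| + |p.2 - x₀.2| := by
      calc |p.2| = |x₀.2 + (p.2 - x₀.2)| := by ring_nf
        _ ≤ |x₀.2| + |p.2 - x₀.2| := abs_add_le _ _
    linarith

noncomputable def toyEps (m : ℝ) : ℝ := (m / 8) / (2 + 2 / (m / 2))

lemma toyEps_pos {m : ℝ} (hm : 0 < m) : 0 < toyEps m := by
  unfold toyEps; positivity

lemma toy_local_sol {m : ℝ} (hm0 : 0 < m) (hm1 : m ≤ 1) {x₀ : ℝ × ℝ}
    (hx : m ≤ toyN x₀) (hx1 : toyN x₀ ≤ 1) (t₀ : ℝ) :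
    ∃ y : ℝ → ℝ × ℝ, y t₀ = x₀ ∧
      ∀ t ∈ Ioo (t₀ - toyEps m) (t₀ + toyEps m), HasDerivAt y (toyRHS (y t)) t := by
  have hε := toyEps_pos hm0
  have hC : (0:ℝ) < 2 + 2 / (m / 2) := by positivity
  have hpl : IsPicardLindelof (fun _ => toyRHS) (tmin := t₀ - toyEps m) (tmax := t₀ + toyEps m)
      ⟨t₀, ⟨by linarith, by linarith⟩⟩ x₀ ⟨m / 8, by positivity⟩ 0 ⟨2 + 2 / (m / 2), hC.le⟩
      (1 + 2 / (m / 2)).toNNReal :=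
    IsPicardLindelof.of_time_independent
      (fun p hp => by
        obtain ⟨h1, h2, h3⟩ := toy_ball_subset hm0 hm1 hx hx1 hp
        exact toy_norm_le (by positivity) h1 h2 h3)
      ((toy_lipschitzOnWith (by positivity : (0:ℝ) < m/2)).mono
        (fun p hp => (toy_ball_subset hm0 hm1 hx hx1 hp).1))
      (by
        show (2 + 2 / (m / 2)) * max (t₀ + toyEps m - t₀) (t₀ - (t₀ - toyEps m)) ≤ m / 8 - 0
        rw [sub_zero, add_sub_cancel_left, sub_sub_cancel, max_self]
        apply le_of_eq
        rw [toyEps]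
        field_simp)
  obtain ⟨f, hf0, hf⟩ := hpl.exists_eq_forall_mem_Icc_hasDerivWithinAt₀
  exact ⟨f, hf0, fun t ht => (hf t (Ioo_subset_Icc_self ht)).hasDerivAt (Icc_mem_nhds ht.1 ht.2)⟩

section
set_option maxHeartbeats 1000000
open Set Real

lemma toy_cont {S : Set ℝ} {x : ℝ → ℝ × ℝ}
    (hsol : ∀ t ∈ S, x t ≠ 0 ∧ HasDerivAt x (toyRHS (x t)) t) :
    ∀ t ∈ S, ContinuousAt x t := fun t ht => (hsol t ht).2.continuousAt

/-- conservation of the Hamiltonian along a solution on an order-connected set -/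
lemma toy_sol_H_eq {S : Set ℝ} (hS : S.OrdConnected) {x : ℝ → ℝ × ℝ}
    (hsol : ∀ t ∈ S, x t ≠ 0 ∧ HasDerivAt x (toyRHS (x t)) t)
    {a b : ℝ} (ha : a ∈ S) (hb : b ∈ S) : toyH (x b) = toyH (x a) := by
  have key : ∀ u v : ℝ, u ∈ S → v ∈ S → u ≤ v → toyH (x v) = toyH (x u) := by
    intro u v hu hv huv
    have hsub : Icc u v ⊆ S := hS.out hu hv
    have := constant_of_has_deriv_right_zero (f := fun s => toyH (x s))
      (a := u) (b := v)
      (fun t ht => (toyH_hasDerivAt_zero (hsol t (hsub ht)).2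
        (hsol t (hsub ht)).1).continuousAt.continuousWithinAt)
      (fun t ht => (toyH_hasDerivAt_zero (hsol t (hsub (Ico_subset_Icc_self ht))).2
        (hsol t (hsub (Ico_subset_Icc_self ht))).1).hasDerivWithinAt)
    exact this v (right_mem_Icc.2 huv)
  rcases le_total a b with h | h
  · exact key a b ha hb h
  · exact (key b a hb ha h).symm

lemma toy_absmul {p : ℝ × ℝ} : |p.1 * p.2| ≤ toyN p / 2 := by
  rw [abs_mul]
  have := sq_nonneg (|p.1| - |p.2|)
  have := sq_abs p.1
  have := sq_abs p.2
  simp only [toyN]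
  nlinarith [abs_nonneg p.1, abs_nonneg p.2]

/-- the annulus bounds: solutions with small energy stay in an annulus. -/
lemma toy_barrier {S : Set ℝ} (hS : S.OrdConnected) {x : ℝ → ℝ × ℝ}
    (hsol : ∀ t ∈ S, x t ≠ 0 ∧ HasDerivAt x (toyRHS (x t)) t)
    {t₀ : ℝ} (ht₀ : t₀ ∈ S) (hc : toyH (x t₀) < -1) (hn : toyN (x t₀) < 1) :
    ∀ t ∈ S, toyN (x t) < 1 ∧
      Real.exp (2 * toyH (x t₀) - 1) ≤ toyN (x t) ∧
      toyN (x t) ≤ Real.exp (2 * toyH (x t₀) + 1) := by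
  have hsmall : ∀ t ∈ S, toyN (x t) < 1 := by
    intro t ht
    by_contra hge
    push_neg at hge
    have hsub : uIcc t₀ t ⊆ S := hS.uIcc_subset ht₀ ht
    have hcont : ContinuousOn (fun s => toyN (x s)) (uIcc t₀ t) := fun s hs =>
      (toyN_continuous.continuousAt.comp
        ((hsol s (hsub hs)).2.continuousAt)).continuousWithinAt
    have h1 : (1:ℝ) ∈ uIcc (toyN (x t₀)) (toyN (x t)) := by
      rw [Set.mem_uIcc]; left; exact ⟨hn.le, hge⟩
    obtain ⟨t', ht', heq⟩ := intermediate_value_uIcc hcont h1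
    have hH : toyH (x t') = toyH (x t₀) := toy_sol_H_eq hS hsol ht₀ (hsub ht')
    have habs : |(x t').1 * (x t').2| ≤ 1 / 2 := by
      have h2 := toy_absmul (p := x t')
      have heq' : toyN (x t') = 1 := heq
      rw [heq'] at h2; linarith
    have heq' : toyN (x t') = 1 := heq
    have : toyH (x t') = - ((x t').1 * (x t').2) := by
      simp only [toyH, heq', Real.log_one]; ring
    rw [this] at hH
    have := abs_le.mp habs
    linarith [hH]
  intro t ht
  refine ⟨hsmall t ht, ?_, ?_⟩
  · have hH : toyH (x t) = toyH (x t₀) := toy_sol_H_eq hS hsol ht₀ ht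
    have hpos : 0 < toyN (x t) := toyN_pos (hsol t ht).1
    have habs : |(x t).1 * (x t).2| ≤ 1 / 2 := by
      have := toy_absmul (p := x t)
      linarith [hsmall t ht]
    have hlog : 2 * toyH (x t₀) - 1 ≤ Real.log (toyN (x t)) := by
      have : toyH (x t) = Real.log (toyN (x t)) / 2 - (x t).1 * (x t).2 := rfl
      rw [this] at hH
      have := abs_le.mp habs
      linarith
    calc Real.exp (2 * toyH (x t₀) - 1) ≤ Real.exp (Real.log (toyN (x t))) :=
          Real.exp_le_exp.2 hlog
      _ = toyN (x t) := Real.exp_log hpos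
  · have hH : toyH (x t) = toyH (x t₀) := toy_sol_H_eq hS hsol ht₀ ht
    have hpos : 0 < toyN (x t) := toyN_pos (hsol t ht).1
    have habs : |(x t).1 * (x t).2| ≤ 1 / 2 := by
      have := toy_absmul (p := x t)
      linarith [hsmall t ht]
    have hlog : Real.log (toyN (x t)) ≤ 2 * toyH (x t₀) + 1 := by
      have : toyH (x t) = Real.log (toyN (x t)) / 2 - (x t).1 * (x t).2 := rfl
      rw [this] at hH
      have := abs_le.mp habs
      linarith
    calc toyN (x t) = Real.exp (Real.log (toyN (x t))) := (Real.exp_log hpos).symm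
      _ ≤ Real.exp (2 * toyH (x t₀) + 1) := Real.exp_le_exp.2 hlog

end

section
set_option maxHeartbeats 1000000
open Set Real

lemma toyN_ne_zero {p : ℝ × ℝ} (h : 0 < toyN p) : p ≠ 0 := by
  intro h0
  rw [h0] at h
  simp [toyN] at h

lemma abs_le_of_mem_uIcc' {t₁ s s' : ℝ} (h : s' ∈ uIcc t₁ s) : |s' - t₁| ≤ |s - t₁| := by
  rcases le_total t₁ s with hle | hle
  · rw [uIcc_of_le hle] at h
    rw [abs_of_nonneg (by linarith [h.1]), abs_of_nonneg (by linarith)]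
    linarith [h.2]
  · rw [uIcc_of_ge hle] at h
    rw [abs_of_nonpos (by linarith [h.2]), abs_of_nonpos (by linarith)]
    linarith [h.1]

lemma abs_lt_of_mem_uIcc' {t₁ t₂ s : ℝ} (hs : s ∈ uIcc t₁ t₂) (hne : s ≠ t₂) :
    |s - t₁| < |t₂ - t₁| := by
  rcases le_total t₁ t₂ with h | h
  · rw [uIcc_of_le h] at hs
    rw [abs_of_nonneg (by linarith [hs.1]), abs_of_nonneg (by linarith)]
    rcases hs.2.lt_or_eq with h3 | h3
    · linarith
    · exact absurd h3 hne
  · rw [uIcc_of_ge h] at hs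
    rw [abs_of_nonpos (by linarith [hs.2]), abs_of_nonpos (by linarith)]
    rcases hs.1.lt_or_eq with h3 | h3
    · linarith
    · exact absurd h3.symm hne

lemma toy_bootstrap {ε : ℝ} (hε : 0 < ε) {t₁ : ℝ} {y : ℝ → ℝ × ℝ}
    (hy : ∀ t ∈ Ioo (t₁ - ε) (t₁ + ε), HasDerivAt y (toyRHS (y t)) t)
    (hc : toyH (y t₁) < -1)
    (hn1 : Real.exp (2 * toyH (y t₁) - 1) ≤ toyN (y t₁)) :
    ∀ t ∈ Ioo (t₁ - ε) (t₁ + ε), Real.exp (2 * toyH (y t₁) - 1) / 2 < toyN (y t) := by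
  set c := toyH (y t₁) with hcdef
  set m := Real.exp (2 * c - 1) with hmdef
  have hm : 0 < m := Real.exp_pos _
  have hm1 : m ≤ 1 := Real.exp_le_one_iff.2 (by linarith)
  intro t ht
  by_contra hle
  push_neg at hle
  have ht₁mem : t₁ ∈ Ioo (t₁ - ε) (t₁ + ε) := ⟨by linarith, by linarith⟩
  have hsub : uIcc t₁ t ⊆ Ioo (t₁ - ε) (t₁ + ε) :=
    (ordConnected_Ioo).uIcc_subset ht₁mem ht
  have hcont : ContinuousOn (fun s => toyN (y s)) (uIcc t₁ t) := fun s hs =>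
    (toyN_continuous.continuousAt.comp ((hy s (hsub hs)).continuousAt)).continuousWithinAt
  have hmem : m / 2 ∈ uIcc (toyN (y t₁)) (toyN (y t)) := by
    rw [Set.mem_uIcc]; right; exact ⟨hle, by linarith⟩
  obtain ⟨s₀, hs₀, hgs₀⟩ := intermediate_value_uIcc hcont hmem
  -- the set of crossing times
  set A := uIcc t₁ t ∩ (fun s => toyN (y s)) ⁻¹' {m / 2} with hAdef
  have hAne : A.Nonempty := ⟨s₀, hs₀, hgs₀⟩
  have hAclosed : IsClosed A :=
    hcont.preimage_isClosed_of_isClosed (by rw [uIcc]; exact isClosed_Icc) isClosed_singleton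
  have hAcomp : IsCompact A :=
    isCompact_uIcc.of_isClosed_subset hAclosed inter_subset_left
  obtain ⟨t₂, ht₂A, ht₂min⟩ := hAcomp.exists_isMinOn hAne
    (continuousOn_of_forall_continuousAt fun s _ =>
      ((continuous_abs.comp (continuous_sub_right t₁)).continuousAt))
  obtain ⟨ht₂mem, ht₂val⟩ := ht₂A
  have ht₂val : toyN (y t₂) = m / 2 := ht₂val
  -- everything between t₁ and t₂ stays above m/2
  have hclaim : ∀ s ∈ uIcc t₁ t₂, m / 2 ≤ toyN (y s) := by
    intro s hs
    by_contra hlt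
    push_neg at hlt
    have hne : s ≠ t₂ := fun h => by rw [h, ht₂val] at hlt; exact lt_irrefl _ hlt
    have hsub2 : uIcc t₁ t₂ ⊆ uIcc t₁ t := uIcc_subset_uIcc left_mem_uIcc ht₂mem
    have hsub3 : uIcc t₁ s ⊆ uIcc t₁ t :=
      (uIcc_subset_uIcc left_mem_uIcc hs).trans hsub2
    have hmem2 : m / 2 ∈ uIcc (toyN (y t₁)) (toyN (y s)) := by
      rw [Set.mem_uIcc]; right; exact ⟨hlt.le, by linarith⟩
    obtain ⟨s', hs', hgs'⟩ := intermediate_value_uIcc (hcont.mono hsub3) hmem2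
    have hs'A : s' ∈ A := ⟨hsub3 hs', hgs'⟩
    have h1 := ht₂min hs'A
    simp only [Function.comp] at h1
    have h2 : |s' - t₁| ≤ |s - t₁| := abs_le_of_mem_uIcc' hs'
    have h3 : |s - t₁| < |t₂ - t₁| := abs_lt_of_mem_uIcc' hs hne
    have h4 : |t₂ - t₁| ≤ |s' - t₁| := h1
    linarith
  -- hence `y` does not vanish between t₁ and t₂, so H is conserved there
  have hsol' : ∀ s ∈ uIcc t₁ t₂, y s ≠ 0 ∧ HasDerivAt y (toyRHS (y s)) s := by
    intro s hs
    refine ⟨toyN_ne_zero (lt_of_lt_of_le (by linarith) (hclaim s hs)), ?_⟩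
    exact hy s (hsub (uIcc_subset_uIcc left_mem_uIcc ht₂mem hs))
  have hH : toyH (y t₂) = c :=
    toy_sol_H_eq Set.ordConnected_uIcc hsol' left_mem_uIcc right_mem_uIcc
  -- contradiction via the Hamiltonian value at t₂
  have habs : |(y t₂).1 * (y t₂).2| ≤ 1 / 2 := by
    have := toy_absmul (p := y t₂)
    rw [ht₂val] at this
    linarith
  have hHval : toyH (y t₂) = Real.log (m / 2) / 2 - (y t₂).1 * (y t₂).2 := by
    simp only [toyH, ht₂val]
  have hlog : Real.log (m / 2) ≥ 2 * c - 1 := by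
    rw [hHval] at hH
    have := abs_le.mp habs
    linarith
  have hlogm : Real.log m = 2 * c - 1 := Real.log_exp _
  have : Real.log (m / 2) = Real.log m - Real.log 2 :=
    Real.log_div hm.ne' (by norm_num)
  have hlog2 : (0:ℝ) < Real.log 2 := Real.log_pos (by norm_num)
  linarith

end

section
set_option maxHeartbeats 1000000
open Set Real

/-- Global uniqueness for the toy ODE for solutions staying in the annulus. -/
lemma toy_unique_global {m : ℝ} (hm : 0 < m) {x y : ℝ → ℝ × ℝ}
    (hx : ∀ t, HasDerivAt x (toyRHS (x t)) t ∧ m ≤ toyN (x t))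
    (hy : ∀ t, HasDerivAt y (toyRHS (y t)) t ∧ m ≤ toyN (y t))
    {t₀ : ℝ} (heq : x t₀ = y t₀) (t : ℝ) : x t = y t := by
  have hmem : t₀ ∈ Ioo (t₀ - (|t - t₀| + 1)) (t₀ + (|t - t₀| + 1)) := by
    constructor <;> [skip; skip] <;> nlinarith [abs_nonneg (t - t₀)]
  have := ODE_solution_unique_of_mem_Ioo (v := fun _ => toyRHS)
    (s := fun _ => {p : ℝ × ℝ | m ≤ toyN p}) (K := (1 + 2 / m).toNNReal)
    (f := x) (g := y) (t₀ := t₀)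
    (fun _ _ => toy_lipschitzOnWith hm) hmem
    (fun t' _ => ⟨(hx t').1, (hx t').2⟩)
    (fun t' _ => ⟨(hy t').1, (hy t').2⟩) heq
  apply this
  constructor <;> cases' abs_le.mp (le_refl |t - t₀|) with h1 h2 <;> linarith

/-- time-reversal symmetry: swapping coordinates and reversing time gives a solution. -/
lemma toy_reversal {x : ℝ → ℝ × ℝ} {t₁ : ℝ}
    (hx : ∀ t, HasDerivAt x (toyRHS (x t)) t) (t : ℝ) :
    HasDerivAt (fun s => (((x (2 * t₁ - s)).2, (x (2 * t₁ - s)).1) : ℝ × ℝ))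
      (toyRHS ((x (2 * t₁ - t)).2, (x (2 * t₁ - t)).1)) t := by
  have hinner : HasDerivAt (fun s : ℝ => 2 * t₁ - s) (-1) t := by
    simpa using (hasDerivAt_id t).const_sub (2 * t₁)
  have hcomp : HasDerivAt (fun s => x (2 * t₁ - s))
      ((-1 : ℝ) • toyRHS (x (2 * t₁ - t))) t :=
    HasDerivAt.scomp t (hx (2 * t₁ - t)) hinner
  have h1 : HasDerivAt (fun s => (x (2 * t₁ - s)).1)
      (((-1 : ℝ) • toyRHS (x (2 * t₁ - t))).1) t := hcomp.fst
  have h2 : HasDerivAt (fun s => (x (2 * t₁ - s)).2)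
      (((-1 : ℝ) • toyRHS (x (2 * t₁ - t))).2) t := hcomp.snd
  have := h2.prodMk h1
  convert this using 1
  have hn : (x (2*t₁ - t)).2 ^ 2 + (x (2*t₁ - t)).1 ^ 2
      = (x (2*t₁ - t)).1 ^ 2 + (x (2*t₁ - t)).2 ^ 2 := by ring
  simp only [toyRHS, Prod.smul_mk, Prod.mk.injEq, smul_eq_mul, hn]
  constructor <;> ring

end

section
set_option maxHeartbeats 1000000
open Set Real

lemma toy_v_sub {p : ℝ × ℝ} (hp : p ≠ 0) :
    (toyRHS p).1 - (toyRHS p).2 = (p.1 + p.2) * (1 - 1 / toyN p) := by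
  have h := (toyN_pos hp).ne'
  simp only [toyRHS, toyN] at *
  field_simp
  ring

lemma toy_v_add {p : ℝ × ℝ} (hp : p ≠ 0) :
    (toyRHS p).1 + (toyRHS p).2 = (p.1 - p.2) * (1 + 1 / toyN p) := by
  have h := (toyN_pos hp).ne'
  simp only [toyRHS, toyN] at *
  field_simp
  ring

/-- Any global annulus solution crosses the diagonal in every interval of suitable length. -/
lemma toy_diag_crossing {m M : ℝ} (hm : 0 < m) (hM : M < 1) {x : ℝ → ℝ × ℝ}
    (hx : ∀ t, (x t ≠ 0 ∧ HasDerivAt x (toyRHS (x t)) t) ∧ m ≤ toyN (x t) ∧ toyN (x t) ≤ M)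
    (T : ℝ) :
    ∃ t' ∈ Icc T (T + (π + 1) / min 2 (1 / M - 1)), (x t').1 = (x t').2 := by
  have hmM : m ≤ M := le_trans (hx T).2.1 (hx T).2.2
  have hM0 : 0 < M := lt_of_lt_of_le hm hmM
  have hMinv : 1 < 1 / M := (one_lt_div hM0).2 hM
  have hμ : 0 < min 2 (1 / M - 1) := lt_min (by norm_num) (by linarith)
  set μ := min 2 (1 / M - 1) with hμdef
  set L := (π + 1) / μ with hLdef
  have hL : 0 < L := div_pos (by positivity) hμ
  by_contra hcon
  push_neg at hcon
  set d : ℝ → ℝ := fun t => (x t).1 - (x t).2 with hddef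
  set s : ℝ → ℝ := fun t => (x t).1 + (x t).2 with hsdef
  have hdne : ∀ t ∈ Icc T (T + L), d t ≠ 0 := fun t ht =>
    sub_ne_zero.2 (hcon t ht)
  have hd' : ∀ t, HasDerivAt d (s t * (1 - 1 / toyN (x t))) t := by
    intro t
    have h1 : HasDerivAt (fun u => (x u).1) (toyRHS (x t)).1 t := (hx t).1.2.fst
    have h2 : HasDerivAt (fun u => (x u).2) (toyRHS (x t)).2 t := (hx t).1.2.snd
    have := h1.sub h2
    rw [toy_v_sub (hx t).1.1] at this
    exact this
  have hs' : ∀ t, HasDerivAt s (d t * (1 + 1 / toyN (x t))) t := by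
    intro t
    have h1 : HasDerivAt (fun u => (x u).1) (toyRHS (x t)).1 t := (hx t).1.2.fst
    have h2 : HasDerivAt (fun u => (x u).2) (toyRHS (x t)).2 t := (hx t).1.2.snd
    have := h1.add h2
    rw [toy_v_add (hx t).1.1] at this
    exact this
  set q : ℝ → ℝ := fun t => s t / d t with hqdef
  set F' : ℝ → ℝ := fun t => 1 / (1 + q t ^ 2) *
      ((d t * (1 + 1 / toyN (x t)) * d t - s t * (s t * (1 - 1 / toyN (x t)))) / d t ^ 2)
    with hF'def
  have hg' : ∀ t ∈ Icc T (T + L), HasDerivAt (fun t => arctan (q t)) (F' t) t := by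
    intro t ht
    have hq' : HasDerivAt q
        ((d t * (1 + 1 / toyN (x t)) * d t - s t * (s t * (1 - 1 / toyN (x t)))) / d t ^ 2) t :=
      (hs' t).div (hd' t) (hdne t ht)
    exact (Real.hasDerivAt_arctan (q t)).comp t hq'
  have hbound : ∀ t ∈ Icc T (T + L), μ ≤ F' t := by
    intro t ht
    have hn1 : m ≤ toyN (x t) := (hx t).2.1
    have hn2 : toyN (x t) ≤ M := (hx t).2.2
    have hn0 : 0 < toyN (x t) := lt_of_lt_of_le hm hn1
    have hD := hdne t ht
    have hD2 : 0 < d t ^ 2 := by positivity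
    have hDS : 0 < d t ^ 2 + s t ^ 2 := by positivity
    have he : F' t = ((1 + 1 / toyN (x t)) * d t ^ 2 - (1 - 1 / toyN (x t)) * s t ^ 2)
        / (d t ^ 2 + s t ^ 2) := by
      rw [hF'def]
      simp only [hqdef]
      field_simp
    rw [he, le_div_iff₀ hDS]
    have e1 : μ ≤ 2 := min_le_left _ _
    have e2 : μ ≤ 1 / M - 1 := min_le_right _ _
    have e3 : 1 / M ≤ 1 / toyN (x t) := one_div_le_one_div_of_le hn0 hn2
    have e4 : 2 ≤ 1 + 1 / toyN (x t) := by linarith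
    nlinarith [sq_nonneg (d t), sq_nonneg (s t)]
  have hcont : ContinuousOn (fun t => arctan (q t)) (Icc T (T + L)) := fun t ht =>
    (hg' t ht).continuousAt.continuousWithinAt
  obtain ⟨ξ, hξ, hslope⟩ := exists_hasDerivAt_eq_slope (fun t => arctan (q t)) F'
    (by linarith : T < T + L) hcont (fun t ht => hg' t (Ioo_subset_Icc_self ht))
  have h1 : μ ≤ F' ξ := hbound ξ (Ioo_subset_Icc_self hξ)
  rw [hslope] at h1
  have hTT : T + L - T = L := by ring
  rw [hTT] at h1
  have h2 : μ * L ≤ arctan (q (T + L)) - arctan (q T) := by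
    rw [le_div_iff₀ hL] at h1
    linarith
  have h3 : μ * L = π + 1 := by
    rw [hLdef]
    field_simp
  have h4 := Real.arctan_lt_pi_div_two (q (T + L))
  have h5 := Real.neg_pi_div_two_lt_arctan (q T)
  have := Real.pi_pos
  linarith

end

section
set_option maxHeartbeats 1000000
open Set Real

lemma toy_periodic {m M : ℝ} (hm : 0 < m) (hM : M < 1) {x : ℝ → ℝ × ℝ}
    (hx : ∀ t, (x t ≠ 0 ∧ HasDerivAt x (toyRHS (x t)) t) ∧ m ≤ toyN (x t) ∧ toyN (x t) ≤ M) :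
    ∃ τ > (0:ℝ), ∀ t, x (t + τ) = x t := by
  set L := (π + 1) / min 2 (1 / M - 1) with hLdef
  obtain ⟨t₁, ht₁, hd₁⟩ := toy_diag_crossing hm hM hx 0
  obtain ⟨t₂, ht₂, hd₂⟩ := toy_diag_crossing hm hM hx (L + 1)
  rw [← hLdef] at ht₁ ht₂
  have ht₁₂ : t₁ < t₂ := by
    have := ht₁.2
    have := ht₂.1
    simp only [zero_add] at *
    linarith
  have hrefl : ∀ t₀, (x t₀).1 = (x t₀).2 →
      ∀ t, x t = ((x (2 * t₀ - t)).2, (x (2 * t₀ - t)).1) := by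
    intro t₀ hdiag t
    apply toy_unique_global hm (x := x)
      (y := fun s => (((x (2 * t₀ - s)).2, (x (2 * t₀ - s)).1) : ℝ × ℝ))
      (fun u => ⟨(hx u).1.2, (hx u).2.1⟩)
      (fun u => ⟨toy_reversal (fun v => (hx v).1.2) u, by
        have : toyN (((x (2 * t₀ - u)).2, (x (2 * t₀ - u)).1) : ℝ × ℝ)
            = toyN (x (2 * t₀ - u)) := by simp only [toyN]; ring
        rw [this]
        exact (hx (2 * t₀ - u)).2.1⟩)
      (t₀ := t₀) ?_ t
    show x t₀ = ((x (2 * t₀ - t₀)).2, (x (2 * t₀ - t₀)).1)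
    have h2 : 2 * t₀ - t₀ = t₀ := by ring
    rw [h2]
    exact Prod.ext hdiag hdiag.symm
  refine ⟨2 * (t₂ - t₁), by linarith, fun t => ?_⟩
  have e2 := hrefl t₂ hd₂ (t + 2 * (t₂ - t₁))
  have harg : 2 * t₂ - (t + 2 * (t₂ - t₁)) = 2 * t₁ - t := by ring
  rw [harg] at e2
  rw [e2, ← hrefl t₁ hd₁ t]

end
section
set_option maxHeartbeats 1000000
open Set Real

lemma toy_glue_eq {m : ℝ} (hm : 0 < m) {I J' : Set ℝ} (hI : I.OrdConnected)
    (hJ : J'.OrdConnected) {x y : ℝ → ℝ × ℝ} {t₁ : ℝ} (ht₁I : t₁ ∈ I) (ht₁J : t₁ ∈ J')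
    (hx : ∀ t ∈ I, HasDerivAt x (toyRHS (x t)) t ∧ m ≤ toyN (x t))
    (hy : ∀ t ∈ J', HasDerivAt y (toyRHS (y t)) t ∧ m ≤ toyN (y t))
    (heq : x t₁ = y t₁) : ∀ t ∈ I ∩ J', x t = y t := by
  intro t ht
  have hsub : uIcc t₁ t ⊆ I ∩ J' := (hI.inter hJ).uIcc_subset ⟨ht₁I, ht₁J⟩ ht
  rcases le_total t₁ t with hle | hle
  · rw [uIcc_of_le hle] at hsub
    exact ODE_solution_unique_of_mem_Icc_right (v := fun _ => toyRHS)
      (s := fun _ => {p : ℝ × ℝ | m ≤ toyN p}) (K := (1 + 2 / m).toNNReal)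
      (fun _ _ => toy_lipschitzOnWith hm)
      (fun u hu => (hx u (hsub hu).1).1.continuousAt.continuousWithinAt)
      (fun u hu => (hx u (hsub (Ico_subset_Icc_self hu)).1).1.hasDerivWithinAt)
      (fun u hu => (hx u (hsub (Ico_subset_Icc_self hu)).1).2)
      (fun u hu => (hy u (hsub hu).2).1.continuousAt.continuousWithinAt)
      (fun u hu => (hy u (hsub (Ico_subset_Icc_self hu)).2).1.hasDerivWithinAt)
      (fun u hu => (hy u (hsub (Ico_subset_Icc_self hu)).2).2)
      heq (right_mem_Icc.2 hle)
  · rw [uIcc_of_ge hle] at hsub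
    exact ODE_solution_unique_of_mem_Icc_left (v := fun _ => toyRHS)
      (s := fun _ => {p : ℝ × ℝ | m ≤ toyN p}) (K := (1 + 2 / m).toNNReal)
      (fun _ _ => toy_lipschitzOnWith hm)
      (fun u hu => (hx u (hsub hu).1).1.continuousAt.continuousWithinAt)
      (fun u hu => (hx u (hsub (Ioc_subset_Icc_self hu)).1).1.hasDerivWithinAt)
      (fun u hu => (hx u (hsub (Ioc_subset_Icc_self hu)).1).2)
      (fun u hu => (hy u (hsub hu).2).1.continuousAt.continuousWithinAt)
      (fun u hu => (hy u (hsub (Ioc_subset_Icc_self hu)).2).1.hasDerivWithinAt)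
      (fun u hu => (hy u (hsub (Ioc_subset_Icc_self hu)).2).2)
      heq (left_mem_Icc.2 hle)

end

/-- There is `r₀ > 0` such that every maximal solution of the toy model
`ẋ₁ = x₁ − x₂/|x|²`, `ẋ₂ = −x₂ + x₁/|x|²` with `0 < |x(0)| < r₀` is global and periodic. -/
theorem stmt18 :
    ∃ r₀ > (0 : ℝ), ∀ (I : Set ℝ) (x : ℝ → ℝ × ℝ),
      IsOpen I → IsPreconnected I → (0 : ℝ) ∈ I →
      (∀ t ∈ I, x t ≠ 0 ∧ HasDerivAt x (toyRHS (x t)) t) →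
      -- maximality: any solution on a larger open interval extending `x` gives no new times
      (∀ (J : Set ℝ) (y : ℝ → ℝ × ℝ), IsOpen J → IsPreconnected J → I ⊆ J →
        (∀ t ∈ J, y t ≠ 0 ∧ HasDerivAt y (toyRHS (y t)) t) →
        (∀ t ∈ I, y t = x t) → J ⊆ I) →
      0 < Real.sqrt ((x 0).1 ^ 2 + (x 0).2 ^ 2) →
      Real.sqrt ((x 0).1 ^ 2 + (x 0).2 ^ 2) < r₀ →
      I = Set.univ ∧ ∃ τ > (0 : ℝ), ∀ t : ℝ, x (t + τ) = x t := by
  refine ⟨Real.exp (-2), Real.exp_pos _, ?_⟩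
  intro I x hIopen hIconn hI0 hsol hmax h0pos h0lt
  classical
  have hIord : I.OrdConnected := hIconn.ordConnected
  have hn0pos : 0 < toyN (x 0) := Real.sqrt_pos.mp h0pos
  have hn0lt : toyN (x 0) < Real.exp (-4) := by
    have h1 : Real.exp (-4) = Real.exp (-2) * Real.exp (-2) := by
      rw [← Real.exp_add]; norm_num
    have h2 := Real.sq_sqrt (le_of_lt (show (0:ℝ) < (x 0).1 ^ 2 + (x 0).2 ^ 2 from hn0pos))
    have h3 := Real.sqrt_nonneg ((x 0).1 ^ 2 + (x 0).2 ^ 2)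
    have : toyN (x 0) = Real.sqrt ((x 0).1 ^ 2 + (x 0).2 ^ 2) ^ 2 := by
      rw [h2]; rfl
    rw [this, h1]
    nlinarith [Real.exp_pos (-2 : ℝ)]
  have hexp4 : Real.exp (-4:ℝ) < 1 := Real.exp_lt_one_iff.mpr (by norm_num)
  have hn0small : toyN (x 0) < 1 := lt_trans hn0lt hexp4
  set c := toyH (x 0) with hcdef
  have hclt : c < -3/2 := by
    have hlog : Real.log (toyN (x 0)) < -4 := by
      have := Real.log_lt_log hn0pos hn0lt
      rwa [Real.log_exp] at this
    have habs : |(x 0).1 * (x 0).2| ≤ toyN (x 0) / 2 := toy_absmul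
    have := abs_le.mp habs
    have : c = Real.log (toyN (x 0)) / 2 - (x 0).1 * (x 0).2 := rfl
    rw [this]
    nlinarith [hn0small, hn0pos]
  have hc1 : c < -1 := by linarith
  set m := Real.exp (2 * c - 1) with hmdef
  set M := Real.exp (2 * c + 1) with hMdef
  have hm : 0 < m := Real.exp_pos _
  have hmle1 : m ≤ 1 := Real.exp_le_one_iff.mpr (by linarith)
  have hM1 : M < 1 := Real.exp_lt_one_iff.mpr (by linarith)
  have hbar := toy_barrier hIord hsol hI0 hc1 hn0small
  -- globality
  have hglobal : I = Set.univ := by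
    by_contra hne
    have hfront : (frontier I).Nonempty := nonempty_frontier_iff.mpr ⟨⟨0, hI0⟩, hne⟩
    obtain ⟨b, hb⟩ := hfront
    rw [hIopen.frontier_eq] at hb
    obtain ⟨hbcl, hbnot⟩ := hb
    set ε := toyEps m with hεdef
    have hε : 0 < ε := toyEps_pos hm
    obtain ⟨t₁, ht₁I, ht₁close⟩ := Metric.mem_closure_iff.mp hbcl (ε / 2) (by positivity)
    obtain ⟨hlt1, hmle, hleM⟩ := hbar t₁ ht₁I
    have hMy : toyN (x t₁) ≤ 1 := le_of_lt (lt_of_le_of_lt hleM hM1)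
    obtain ⟨y, hy0, hy⟩ := toy_local_sol hm hmle1 hmle hMy t₁
    have hHt₁ : toyH (x t₁) = c := toy_sol_H_eq hIord hsol hI0 ht₁I
    have hyH : toyH (y t₁) = c := by rw [hy0, hHt₁]
    have hyn : ∀ t ∈ Ioo (t₁ - ε) (t₁ + ε), m / 2 < toyN (y t) := by
      have := toy_bootstrap hε hy (by rw [hyH]; exact hc1)
        (by rw [hyH, hy0, ← hmdef]; exact hmle)
      intro t ht
      have h := this t ht
      rwa [hyH, ← hmdef] at h
    set J' := Ioo (t₁ - ε) (t₁ + ε) with hJ'def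
    have ht₁J : t₁ ∈ J' := ⟨by linarith, by linarith⟩
    have hxy : ∀ t ∈ I ∩ J', x t = y t := by
      apply toy_glue_eq (half_pos hm) hIord Set.ordConnected_Ioo ht₁I ht₁J
      · exact fun t ht => ⟨(hsol t ht).2, by linarith [(hbar t ht).2.1]⟩
      · exact fun t ht => ⟨hy t ht, le_of_lt (hyn t ht)⟩
      · exact hy0.symm
    set z := fun t => if t ∈ I then x t else y t with hzdef
    have hzI : ∀ t ∈ I, z t = x t := fun t ht => if_pos ht
    have hzJ : ∀ t ∈ J', z t = y t := by
      intro t ht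
      by_cases htI : t ∈ I
      · rw [hzdef]; simp only [if_pos htI]; exact hxy t ⟨htI, ht⟩
      · rw [hzdef]; simp only [if_neg htI]
    have hzsol : ∀ t ∈ I ∪ J', z t ≠ 0 ∧ HasDerivAt z (toyRHS (z t)) t := by
      intro t ht
      rcases ht with htI | htJ
      · have hev : z =ᶠ[nhds t] x :=
          Filter.eventually_of_mem (hIopen.mem_nhds htI) hzI
        have hzt : z t = x t := hzI t htI
        refine ⟨by rw [hzt]; exact (hsol t htI).1, ?_⟩
        have := ((hsol t htI).2).congr_of_eventuallyEq hev
        rwa [hzt]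
      · have hev : z =ᶠ[nhds t] y :=
          Filter.eventually_of_mem (isOpen_Ioo.mem_nhds htJ) hzJ
        have hzt : z t = y t := hzJ t htJ
        refine ⟨by rw [hzt]; exact toyN_ne_zero (lt_trans (by positivity) (hyn t htJ)), ?_⟩
        have := (hy t htJ).congr_of_eventuallyEq hev
        rwa [hzt]
    have hsubset := hmax (I ∪ J') z (hIopen.union isOpen_Ioo)
      (hIconn.union t₁ ht₁I ht₁J isPreconnected_Ioo) subset_union_left hzsol hzI
    have hbJ' : b ∈ J' := by
      have := abs_lt.mp (by rw [← Real.dist_eq]; exact ht₁close)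
      constructor <;> [linarith [this.1]; linarith [this.2]]
    exact hbnot (hsubset (Or.inr hbJ'))
  -- periodicity
  refine ⟨hglobal, ?_⟩
  have hsol' : ∀ t : ℝ, x t ≠ 0 ∧ HasDerivAt x (toyRHS (x t)) t := fun t =>
    hsol t (hglobal ▸ Set.mem_univ t)
  have hbar' : ∀ t : ℝ, m ≤ toyN (x t) ∧ toyN (x t) ≤ M := fun t =>
    ⟨(hbar t (hglobal ▸ Set.mem_univ t)).2.1, (hbar t (hglobal ▸ Set.mem_univ t)).2.2⟩
  exact toy_periodic hm hM1 (fun t => ⟨hsol' t, hbar' t⟩)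

end
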